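/- If n ≥ 5 and n ≡ 2, 6, 8, 10, 14 or 18 (mod 31), then the largest minimum weight d(n,5) among all binary LCD [n,5] codes satisfies d(n,5) = ⌊16n/31⌋ − 1 or d(n,5) = ⌊16n/31⌋ − 2. -/

import Mathlib

/-- The (Hamming) weight of a vector over `F_2`. -/
def wt {n : ℕ} (x : Fin n → ZMod 2) : ℕ :=
  Finset.card (Finset.univ.filter fun i => x i ≠ 0)

/-- The dual code of a binary code `C`, with respect to the standard inner product. -/
def dualCode {n : ℕ} (C : Submodule (ZMod 2) (Fin n → ZMod 2)) :
    Submodule (ZMod 2) (Fin n → ZMod 2) where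
  carrier := {x | ∀ y ∈ C, ∑ i, x i * y i = 0}
  add_mem' := by
    intro a b ha hb y hy
    simp [Pi.add_apply, add_mul, Finset.sum_add_distrib, ha y hy, hb y hy]
  zero_mem' := by
    intro y hy
    simp
  smul_mem' := by
    intro c a ha y hy
    simp only [Pi.smul_apply, smul_eq_mul, mul_assoc, ← Finset.mul_sum, ha y hy, mul_zero]

/-- A binary code is linear complementary dual (LCD) if it meets its dual trivially. -/
def IsLCD {n : ℕ} (C : Submodule (ZMod 2) (Fin n → ZMod 2)) : Prop :=
  C ⊓ dualCode C = ⊥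

/-- The minimum weight of a binary code: the smallest weight of a nonzero codeword. -/
noncomputable def minWt {n : ℕ} (C : Submodule (ZMod 2) (Fin n → ZMod 2)) : ℕ :=
  sInf {w | ∃ x ∈ C, x ≠ 0 ∧ wt x = w}

/-- `dLCD n k` is the largest minimum weight among all binary LCD `[n,k]` codes. -/
noncomputable def dLCD (n k : ℕ) : ℕ :=
  sSup {d | ∃ C : Submodule (ZMod 2) (Fin n → ZMod 2),
    Module.finrank (ZMod 2) C = k ∧ IsLCD C ∧ minWt C = d}


def gries : ℕ → ℕ → ℕ
  | 0, _ => 0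
  | (k+1), d => d + gries k ((d+1)/2)

lemma gries_mono : ∀ (k : ℕ) {d d' : ℕ}, d ≤ d' → gries k d ≤ gries k d'
  | 0, _, _, _ => le_refl _
  | (k+1), d, d', h => by
      simp only [gries]
      exact Nat.add_le_add h (gries_mono k (by omega))

lemma griesmer_abstract : ∀ (k : ℕ) (V : Type) [AddCommGroup V] [Module (ZMod 2) V]
    [Fintype V] [DecidableEq V], Module.finrank (ZMod 2) V = k →
    ∀ (a : V → ℕ) (d : ℕ),
    (∀ f : V →ₗ[ZMod 2] ZMod 2, f ≠ 0 →
        d ≤ ∑ v ∈ Finset.univ.filter (fun v => f v ≠ 0), a v) →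
    gries k d ≤ ∑ v ∈ Finset.univ.filter (fun v => v ≠ 0), a v := by
  intro k
  induction k with
  | zero => intro V _ _ _ _ _ a d _; exact Nat.zero_le _
  | succ k ih =>
    intro V iag imod ifin ideq hk a d ha
    haveI : Module.Finite (ZMod 2) V := Module.finite_iff_finite.mpr inferInstance
    have hz01 : ∀ z : ZMod 2, z = 0 ∨ z = 1 := by decide
    have hzadd : ∀ z : ZMod 2, z + z = 0 := by decide
    set Wf : (V →ₗ[ZMod 2] ZMod 2) → ℕ :=
      fun f => ∑ v ∈ Finset.univ.filter (fun v => f v ≠ 0), a v with hWf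
    -- a nonzero functional exists
    have hpos : 0 < Module.finrank (ZMod 2) V := by omega
    haveI : Nontrivial V := Module.nontrivial_of_finrank_pos hpos
    obtain ⟨v0, hv0⟩ := exists_ne (0 : V)
    obtain ⟨f1, hf1⟩ : ∃ f : V →ₗ[ZMod 2] ZMod 2, f v0 ≠ 0 := by
      by_contra hcon; push_neg at hcon
      exact hv0 ((Module.forall_dual_apply_eq_zero_iff (ZMod 2) v0).mp hcon)
    have hf1ne : f1 ≠ 0 := fun h => hf1 (by rw [h]; rfl)
    set Wset : Set ℕ := {w | ∃ f : V →ₗ[ZMod 2] ZMod 2, f ≠ 0 ∧ Wf f = w} with hWset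
    have hWne : Wset.Nonempty := ⟨Wf f1, f1, hf1ne, rfl⟩
    obtain ⟨φ0, hφ0ne, hφ0w⟩ := Nat.sInf_mem hWne
    set d' := sInf Wset with hd'
    have hmin : ∀ f : V →ₗ[ZMod 2] ZMod 2, f ≠ 0 → d' ≤ Wf f :=
      fun f hf => Nat.sInf_le ⟨f, hf, rfl⟩
    have hdd' : d ≤ d' := by rw [← hφ0w]; exact ha φ0 hφ0ne
    obtain ⟨v1, hv1⟩ : ∃ v, φ0 v ≠ 0 := by
      by_contra hcon; push_neg at hcon
      exact hφ0ne (LinearMap.ext fun v => by rw [hcon v]; rfl)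
    have hv11 : φ0 v1 = 1 := by rcases hz01 (φ0 v1) with h | h
                                · exact absurd h hv1
                                · exact h
    set K := LinearMap.ker φ0 with hKdef
    haveI : DecidablePred (· ∈ K) := fun v => decidable_of_iff (φ0 v = 0) (LinearMap.mem_ker).symm
    have hrange : LinearMap.range φ0 = ⊤ := by
      rw [LinearMap.range_eq_top]
      intro c; exact ⟨c • v1, by rw [map_smul, hv11, smul_eq_mul, mul_one]⟩
    have hkK : Module.finrank (ZMod 2) K = k := by
      have h2 := LinearMap.finrank_range_add_finrank_ker φ0
      rw [hrange, finrank_top, Module.finrank_self, hk, ← hKdef] at h2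
      omega
    have hπmem : ∀ v : V, v + φ0 v • v1 ∈ K := fun v => by
      rw [hKdef, LinearMap.mem_ker, map_add, map_smul, hv11, smul_eq_mul, mul_one]
      exact hzadd _
    set π : V →ₗ[ZMod 2] K :=
      LinearMap.codRestrict K (LinearMap.id + LinearMap.smulRight φ0 v1) hπmem with hπ
    have hπval : ∀ v : V, (π v : V) = v + φ0 v • v1 := fun v => rfl
    have hπK : ∀ (v : V) (hv : v ∈ K), π v = ⟨v, hv⟩ := by
      intro v hv
      apply Subtype.ext
      rw [hπval]
      have h0 : φ0 v = 0 := hv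
      rw [h0, zero_smul, add_zero]
    -- residual hypothesis
    have key : ∀ g : K →ₗ[ZMod 2] ZMod 2, g ≠ 0 →
        (d' + 1) / 2 ≤ ∑ u ∈ Finset.univ.filter (fun u : K => g u ≠ 0), a ↑u := by
      intro g hg
      set h0 : V →ₗ[ZMod 2] ZMod 2 := g.comp π with hh0
      set h1 : V →ₗ[ZMod 2] ZMod 2 := g.comp π + φ0 with hh1
      obtain ⟨u0, hu0⟩ : ∃ u, g u ≠ 0 := by
        by_contra hcon; push_neg at hcon
        exact hg (LinearMap.ext fun u => by rw [hcon u]; rfl)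
      have hgK0 : ∀ (v : V) (hv : v ∈ K), h0 v = g ⟨v, hv⟩ := by
        intro v hv
        rw [hh0, LinearMap.comp_apply, hπK v hv]
      have hgK1 : ∀ (v : V) (hv : v ∈ K), h1 v = g ⟨v, hv⟩ := by
        intro v hv
        have hz : φ0 v = 0 := hv
        rw [hh1, LinearMap.add_apply, LinearMap.comp_apply, hπK v hv, hz, add_zero]
      have hne0 : h0 ≠ 0 := by
        intro hcon
        have h := hgK0 ↑u0 u0.2
        rw [hcon, LinearMap.zero_apply] at h
        exact hu0 (by simpa using h.symm)
      have hne1 : h1 ≠ 0 := by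
        intro hcon
        have h := hgK1 ↑u0 u0.2
        rw [hcon, LinearMap.zero_apply] at h
        exact hu0 (by simpa using h.symm)
      have hpoint : ∀ v : V,
          (if h0 v ≠ 0 then a v else 0) + (if h1 v ≠ 0 then a v else 0)
          = 2 * (if v ∈ K ∧ g (π v) ≠ 0 then a v else 0) + (if φ0 v ≠ 0 then a v else 0) := by
        intro v
        rcases hz01 (φ0 v) with hv | hv
        · have hvK : v ∈ K := LinearMap.mem_ker.mpr hv
          have e0 : h0 v = g (π v) := by rw [hh0, LinearMap.comp_apply]
          have e1 : h1 v = g (π v) := by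
            rw [hh1, LinearMap.add_apply, LinearMap.comp_apply, hv, add_zero]
          rw [e0, e1, hv]
          by_cases hgv : g (π v) ≠ 0 <;> simp [hgv, hvK] <;> omega
        · have hvK : v ∉ K := by
            intro hc
            have : φ0 v = 0 := hc
            rw [this] at hv
            exact absurd hv (by decide)
          have e1 : h1 v = h0 v + 1 := by
            rw [hh1, LinearMap.add_apply, hv, hh0]
          have hφne : φ0 v ≠ 0 := by rw [hv]; exact one_ne_zero
          have hKfalse : ¬(v ∈ K ∧ g (π v) ≠ 0) := fun hc => hvK hc.1
          rcases hz01 (h0 v) with h0v | h0v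
          · rw [if_neg (by rw [h0v]; simp), if_pos (by rw [e1, h0v, zero_add]; exact one_ne_zero),
              if_neg hKfalse, if_pos hφne]
          · rw [if_pos (by rw [h0v]; exact one_ne_zero),
              if_neg (by rw [e1, h0v]; decide), if_neg hKfalse, if_pos hφne]
            omega
      have hsum : Wf h0 + Wf h1
          = 2 * (∑ v ∈ Finset.univ.filter (fun v => v ∈ K ∧ g (π v) ≠ 0), a v) + Wf φ0 := by
        simp only [hWf, Finset.sum_filter]
        rw [← Finset.sum_add_distrib, Finset.mul_sum, ← Finset.sum_add_distrib]
        exact Finset.sum_congr rfl fun v _ => hpoint v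
      have hconv : ∑ v ∈ Finset.univ.filter (fun v => v ∈ K ∧ g (π v) ≠ 0), a v
          = ∑ u ∈ Finset.univ.filter (fun u : K => g u ≠ 0), a ↑u := by
        symm
        apply Finset.sum_bij (fun (u : K) (_ : u ∈ Finset.univ.filter (fun u : K => g u ≠ 0)) => (u : V))
        · intro u hu
          rw [Finset.mem_filter] at hu ⊢
          refine ⟨Finset.mem_univ _, u.2, ?_⟩
          rw [hπK ↑u u.2]
          simpa using hu.2
        · intro u1 h1 u2 h2 h
          exact Subtype.ext h
        · intro v hv
          rw [Finset.mem_filter] at hv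
          refine ⟨⟨v, hv.2.1⟩, ?_, rfl⟩
          rw [Finset.mem_filter]
          refine ⟨Finset.mem_univ _, ?_⟩
          have := hv.2.2
          rwa [hπK v hv.2.1] at this
        · intro u hu; rfl
      have w0 := hmin h0 hne0
      have w1 := hmin h1 hne1
      rw [hconv, hφ0w] at hsum
      omega
    have ihK := ih K hkK (fun u => a ↑u) ((d' + 1) / 2) key
    have hconv2 : ∑ u ∈ Finset.univ.filter (fun u : K => u ≠ 0), a ↑u
        = ∑ v ∈ Finset.univ.filter (fun v => v ∈ K ∧ v ≠ 0), a v := by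
      apply Finset.sum_bij (fun (u : K) (_ : u ∈ Finset.univ.filter (fun u : K => u ≠ 0)) => (u : V))
      · intro u hu
        rw [Finset.mem_filter] at hu ⊢
        exact ⟨Finset.mem_univ _, u.2, fun h => hu.2 (Subtype.ext h)⟩
      · intro u1 h1 u2 h2 h
        exact Subtype.ext h
      · intro v hv
        rw [Finset.mem_filter] at hv
        refine ⟨⟨v, hv.2.1⟩, ?_, rfl⟩
        rw [Finset.mem_filter]
        exact ⟨Finset.mem_univ _, fun h => hv.2.2 (congrArg Subtype.val h)⟩
      · intro u hu; rfl
    have hsplit : ∑ v ∈ Finset.univ.filter (fun v => v ∈ K ∧ v ≠ 0), a v + Wf φ0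
        ≤ ∑ v ∈ Finset.univ.filter (fun v => v ≠ 0), a v := by
      have hdisj : Disjoint (Finset.univ.filter (fun v : V => v ∈ K ∧ v ≠ 0))
          (Finset.univ.filter (fun v : V => φ0 v ≠ 0)) := by
        rw [Finset.disjoint_filter]
        intro v _ hv
        have : φ0 v = 0 := hv.1
        simp [this]
      rw [hWf, ← Finset.sum_union hdisj]
      apply Finset.sum_le_sum_of_subset
      intro v hv
      rw [Finset.mem_union, Finset.mem_filter, Finset.mem_filter] at hv
      rw [Finset.mem_filter]
      rcases hv with hv | hv
      · exact ⟨Finset.mem_univ _, hv.2.2⟩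
      · refine ⟨Finset.mem_univ _, fun h => ?_⟩
        rw [h, map_zero] at hv
        exact hv.2 rfl
    calc gries (k+1) d = d + gries k ((d+1)/2) := rfl
      _ ≤ d' + gries k ((d'+1)/2) := Nat.add_le_add hdd' (gries_mono k (by omega))
      _ ≤ Wf φ0 + ∑ v ∈ Finset.univ.filter (fun v => v ∈ K ∧ v ≠ 0), a v := by
          rw [hφ0w]
          exact Nat.add_le_add (le_refl _) (by rw [← hconv2]; exact ihK)
      _ ≤ ∑ v ∈ Finset.univ.filter (fun v => v ≠ 0), a v := by omega

lemma length_ge_gries {n k d : ℕ} (C : Submodule (ZMod 2) (Fin n → ZMod 2))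
    (hrank : Module.finrank (ZMod 2) C = k)
    (hd : ∀ x ∈ C, x ≠ 0 → d ≤ wt x) : gries k d ≤ n := by
  classical
  let V := Module.Dual (ZMod 2) ↥C
  haveI : Finite ↥C := Subtype.finite
  haveI : Finite V := Finite.of_injective _ (DFunLike.coe_injective (F := V))
  letI : Fintype V := Fintype.ofFinite V
  letI : DecidableEq V := Classical.decEq V
  have hfr : Module.finrank (ZMod 2) V = k := by
    show Module.finrank (ZMod 2) (Module.Dual (ZMod 2) ↥C) = k
    rw [Subspace.dual_finrank_eq, hrank]
  set ev : Fin n → V := fun i => (LinearMap.proj i).comp C.subtype with hev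
  set a : V → ℕ := fun φ => (Finset.univ.filter (fun i => ev i = φ)).card with ha
  have hyp : ∀ f : V →ₗ[ZMod 2] ZMod 2, f ≠ 0 →
      d ≤ ∑ φ ∈ Finset.univ.filter (fun φ => f φ ≠ 0), a φ := by
    intro f hf
    set c := (Module.evalEquiv (ZMod 2) ↥C).symm f with hc
    have hfc : ∀ φ : V, f φ = φ c := fun φ =>
      (Module.apply_evalEquiv_symm_apply (ZMod 2) ↥C φ f).symm
    have hcne : c ≠ 0 := by
      intro h
      apply hf
      have h2 := (Module.evalEquiv (ZMod 2) ↥C).apply_symm_apply f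
      rw [← hc, h, map_zero] at h2
      exact h2.symm
    have hkey : (Finset.univ.filter (fun i : Fin n => f (ev i) ≠ 0)).card
        = ∑ φ ∈ Finset.univ.filter (fun φ => f φ ≠ 0), a φ := by
      rw [Finset.card_eq_sum_card_fiberwise
        (f := ev) (t := Finset.univ.filter (fun φ => f φ ≠ 0))
        (fun i hi => by
          rw [Finset.mem_coe, Finset.mem_filter] at hi ⊢
          exact ⟨Finset.mem_univ _, hi.2⟩)]
      apply Finset.sum_congr rfl
      intro φ hφ
      rw [ha]
      congr 1
      ext i
      rw [Finset.mem_filter, Finset.mem_filter, Finset.mem_filter]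
      constructor
      · rintro ⟨⟨_, _⟩, he⟩
        exact ⟨Finset.mem_univ _, he⟩
      · rintro ⟨_, he⟩
        refine ⟨⟨Finset.mem_univ _, ?_⟩, he⟩
        rw [he]
        exact (Finset.mem_filter.mp hφ).2
    have hwt : (Finset.univ.filter (fun i : Fin n => f (ev i) ≠ 0)).card = wt (c : Fin n → ZMod 2) := by
      unfold wt
      congr 1
      ext i
      rw [Finset.mem_filter, Finset.mem_filter]
      rw [hfc (ev i)]
      rfl
    rw [← hkey, hwt]
    refine hd (c : Fin n → ZMod 2) c.2 (fun h => hcne ?_)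
    exact Subtype.ext h
  have hmain := griesmer_abstract k V hfr a d hyp
  have htot : ∑ φ : V, a φ = n := by
    have h2 := Finset.card_eq_sum_card_fiberwise
      (s := (Finset.univ : Finset (Fin n))) (t := (Finset.univ : Finset V))
      (f := ev) (fun x _ => Finset.mem_univ _)
    rw [Finset.card_univ, Fintype.card_fin] at h2
    exact h2.symm
  calc gries k d ≤ ∑ φ ∈ Finset.univ.filter (fun φ => φ ≠ 0), a φ := hmain
    _ ≤ ∑ φ : V, a φ := Finset.sum_le_sum_of_subset (Finset.filter_subset _ _)
    _ = n := htot

def natCol (c : ℕ) : Fin 5 → ZMod 2 := fun k => if c.testBit k.val then 1 else 0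

lemma simplex_weight : ∀ x : Fin 5 → ZMod 2, x ≠ 0 →
    (∑ r ∈ Finset.range 31, if (∑ k, x k * natCol (r + 1) k) ≠ 0 then 1 else 0) = 16 := by
  decide

lemma simplex_gram : ∀ (x : Fin 5 → ZMod 2) (l : Fin 5),
    (∑ r ∈ Finset.range 31, (∑ k, x k * natCol (r + 1) k) * natCol (r + 1) l) = 0 := by
  decide

lemma sum_blocks {M : Type*} [AddCommMonoid M] (g : ℕ → M) (t : ℕ) :
    ∑ j ∈ Finset.range (31 * t), g (j % 31) = t • (∑ r ∈ Finset.range 31, g r) := by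
  induction t with
  | zero => simp
  | succ t ih =>
      have h31 : 31 * (t + 1) = 31 * t + 31 := by ring
      rw [h31, Finset.sum_range_add, ih, succ_nsmul]
      congr 1
      apply Finset.sum_congr rfl
      intro r hr
      rw [Nat.mul_add_mod, Nat.mod_eq_of_lt (Finset.mem_range.mp hr)]

lemma construction {b w : ℕ} (B : ℕ → Fin 5 → ZMod 2)
    (hw : ∀ x : Fin 5 → ZMod 2, x ≠ 0 →
      w ≤ ∑ j ∈ Finset.range b, if (∑ k, x k * B j k) ≠ 0 then 1 else 0)
    (hg : ∀ x : Fin 5 → ZMod 2,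
      (∀ l, (∑ j ∈ Finset.range b, (∑ k, x k * B j k) * B j l) = 0) → x = 0)
    (t n : ℕ) (hn : n = b + 31 * t) :
    ∃ C : Submodule (ZMod 2) (Fin n → ZMod 2),
      Module.finrank (ZMod 2) C = 5 ∧ IsLCD C ∧ w + 16 * t ≤ minWt C := by
  subst hn
  set col : ℕ → Fin 5 → ZMod 2 :=
    fun i => if i < b then B i else natCol ((i - b) % 31 + 1) with hcol
  set E : (Fin 5 → ZMod 2) →ₗ[ZMod 2] (Fin (b + 31 * t) → ZMod 2) :=
    { toFun := fun x i => ∑ k, x k * col ↑i k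
      map_add' := by
        intro x y
        funext i
        simp [add_mul, Finset.sum_add_distrib]
      map_smul' := by
        intro c x
        funext i
        simp [Finset.mul_sum, mul_assoc] } with hE
  have hEapp : ∀ x (i : Fin (b + 31 * t)), E x i = ∑ k, x k * col ↑i k := fun x i => rfl
  -- generic splitting of sums over coordinates
  have hsplit : ∀ {M : Type} [AddCommMonoid M] (G : (Fin 5 → ZMod 2) → M),
      ∑ i : Fin (b + 31 * t), G (col ↑i)
        = (∑ j ∈ Finset.range b, G (B j)) + t • (∑ r ∈ Finset.range 31, G (natCol (r + 1))) := by
    intro M _ G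
    rw [Fin.sum_univ_eq_sum_range (fun j => G (col j)), Finset.sum_range_add]
    congr 1
    · apply Finset.sum_congr rfl
      intro j hj
      simp only [hcol]
      rw [if_pos (Finset.mem_range.mp hj)]
    · have hcol2 : ∀ j, col (b + j) = natCol (j % 31 + 1) := by
        intro j
        simp only [hcol]
        rw [if_neg (by omega), Nat.add_sub_cancel_left]
      calc ∑ j ∈ Finset.range (31 * t), G (col (b + j))
          = ∑ j ∈ Finset.range (31 * t), G (natCol (j % 31 + 1)) := by
            apply Finset.sum_congr rfl
            intro j _
            rw [hcol2]
        _ = t • (∑ r ∈ Finset.range 31, G (natCol (r + 1))) :=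
            sum_blocks (fun r => G (natCol (r + 1))) t
  -- weight of codewords
  have hwt : ∀ x : Fin 5 → ZMod 2, x ≠ 0 → w + 16 * t ≤ wt (E x) := by
    intro x hx
    have : wt (E x) = ∑ i : Fin (b + 31 * t),
        (fun v => if (∑ k, x k * v k) ≠ 0 then 1 else 0) (col ↑i) := by
      rw [wt, Finset.card_filter]
      rfl
    have h2 := hsplit (fun v => if (∑ k, x k * v k) ≠ 0 then 1 else 0)
    rw [this, h2]
    show w + 16 * t ≤ (∑ j ∈ Finset.range b, if (∑ k, x k * B j k) ≠ 0 then 1 else 0)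
      + t • (∑ r ∈ Finset.range 31, if (∑ k, x k * natCol (r + 1) k) ≠ 0 then 1 else 0)
    rw [simplex_weight x hx, smul_eq_mul, Nat.mul_comm t 16]
    exact Nat.add_le_add_right (hw x hx) _
  -- Gram computation
  have hgram : ∀ (x : Fin 5 → ZMod 2) (l : Fin 5),
      ∑ i : Fin (b + 31 * t), E x i * col ↑i l
        = ∑ j ∈ Finset.range b, (∑ k, x k * B j k) * B j l := by
    intro x l
    have : ∑ i : Fin (b + 31 * t), E x i * col ↑i l
        = ∑ i : Fin (b + 31 * t), (fun v => (∑ k, x k * v k) * v l) (col ↑i) := rfl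
    have h2 := hsplit (fun v => (∑ k, x k * v k) * v l)
    rw [this, h2]
    show (∑ j ∈ Finset.range b, (∑ k, x k * B j k) * B j l)
      + t • (∑ r ∈ Finset.range 31, (∑ k, x k * natCol (r + 1) k) * natCol (r + 1) l)
      = ∑ j ∈ Finset.range b, (∑ k, x k * B j k) * B j l
    rw [simplex_gram x l, smul_zero, add_zero]
  -- injectivity
  have hinj : Function.Injective E := by
    rw [injective_iff_map_eq_zero]
    intro x hx
    apply hg
    intro l
    rw [← hgram x l]
    apply Finset.sum_eq_zero
    intro i _
    rw [hx]
    simp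
  refine ⟨LinearMap.range E, ?_, ?_, ?_⟩
  · rw [LinearMap.finrank_range_of_inj hinj]
    simp [Module.finrank_fin_fun]
  · -- LCD
    rw [IsLCD, eq_bot_iff]
    intro z hz
    rw [Submodule.mem_inf] at hz
    obtain ⟨x, hx⟩ := hz.1
    have hdual : ∀ y ∈ LinearMap.range E, ∑ i, z i * y i = 0 := hz.2
    have hx0 : x = 0 := by
      apply hg
      intro l
      have hmem : E (Pi.single l 1) ∈ LinearMap.range E := ⟨Pi.single l 1, rfl⟩
      have hyl : ∀ i : Fin (b + 31 * t), E (Pi.single l 1) i = col ↑i l := by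
        intro i
        rw [hEapp]
        rw [Finset.sum_eq_single_of_mem l (Finset.mem_univ l)
          (fun k _ hk => by rw [Pi.single_eq_of_ne hk, zero_mul])]
        rw [Pi.single_eq_same, one_mul]
      have h0 := hdual _ hmem
      rw [← hgram x l]
      calc ∑ i : Fin (b + 31 * t), E x i * col ↑i l
          = ∑ i, z i * E (Pi.single l 1) i := by
            apply Finset.sum_congr rfl
            intro i _
            rw [hyl, hx]
        _ = 0 := h0
    rw [Submodule.mem_bot, ← hx, hx0, map_zero]
  · -- minWt bound
    have hne : (Set.Nonempty {u | ∃ x ∈ LinearMap.range E, x ≠ 0 ∧ wt x = u}) := by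
      refine ⟨wt (E (Pi.single 0 1)), E (Pi.single 0 1), ⟨Pi.single 0 1, rfl⟩, ?_, rfl⟩
      intro h
      have : (Pi.single 0 1 : Fin 5 → ZMod 2) = 0 := hinj (by rw [h, map_zero])
      have h1 := congrFun this 0
      rw [Pi.single_eq_same] at h1
      exact one_ne_zero h1
    obtain ⟨z, hzC, hzne, hzwt⟩ := Nat.sInf_mem hne
    obtain ⟨x, hx⟩ := hzC
    have hxne : x ≠ 0 := by
      intro h
      rw [h, map_zero] at hx
      exact hzne hx.symm
    rw [minWt, ← hzwt, ← hx]
    exact hwt x hxne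

lemma numeric_gries (n : ℕ) (hn : 5 ≤ n)
    (h : n % 31 = 2 ∨ n % 31 = 6 ∨ n % 31 = 8 ∨ n % 31 = 10 ∨ n % 31 = 14 ∨ n % 31 = 18) :
    n < gries 5 (16 * n / 31) := by
  simp only [gries]
  omega

def Bc2 : ℕ → Fin 5 → ZMod 2 := fun j => natCol (([9, 10, 18, 20, 15, 10, 2, 13, 17, 21, 12, 28, 6, 1, 25, 26, 31, 23, 30, 19, 18, 22, 11, 5, 16, 29, 30, 9, 1, 15, 7, 27, 14]).getD j 0)

lemma hwBc2 : ∀ x : Fin 5 → ZMod 2, x ≠ 0 →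
    15 ≤ ∑ j ∈ Finset.range 33, if (∑ k, x k * Bc2 j k) ≠ 0 then 1 else 0 := by
  decide

lemma hgBc2 : ∀ x : Fin 5 → ZMod 2,
    (∀ l, (∑ j ∈ Finset.range 33, (∑ k, x k * Bc2 j k) * Bc2 j l) = 0) → x = 0 := by
  decide

def Bc6 : ℕ → Fin 5 → ZMod 2 := fun j => natCol (([8, 28, 17, 16, 26, 20]).getD j 0)

lemma hwBc6 : ∀ x : Fin 5 → ZMod 2, x ≠ 0 →
    1 ≤ ∑ j ∈ Finset.range 6, if (∑ k, x k * Bc6 j k) ≠ 0 then 1 else 0 := by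
  decide

lemma hgBc6 : ∀ x : Fin 5 → ZMod 2,
    (∀ l, (∑ j ∈ Finset.range 6, (∑ k, x k * Bc6 j k) * Bc6 j l) = 0) → x = 0 := by
  decide

def Bc8 : ℕ → Fin 5 → ZMod 2 := fun j => natCol (([19, 8, 6, 10, 5, 23, 28, 19]).getD j 0)

lemma hwBc8 : ∀ x : Fin 5 → ZMod 2, x ≠ 0 →
    2 ≤ ∑ j ∈ Finset.range 8, if (∑ k, x k * Bc8 j k) ≠ 0 then 1 else 0 := by
  decide

lemma hgBc8 : ∀ x : Fin 5 → ZMod 2,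
    (∀ l, (∑ j ∈ Finset.range 8, (∑ k, x k * Bc8 j k) * Bc8 j l) = 0) → x = 0 := by
  decide

def Bc10 : ℕ → Fin 5 → ZMod 2 := fun j => natCol (([20, 12, 2, 12, 3, 31, 28, 8, 13, 22]).getD j 0)

lemma hwBc10 : ∀ x : Fin 5 → ZMod 2, x ≠ 0 →
    3 ≤ ∑ j ∈ Finset.range 10, if (∑ k, x k * Bc10 j k) ≠ 0 then 1 else 0 := by
  decide

lemma hgBc10 : ∀ x : Fin 5 → ZMod 2,
    (∀ l, (∑ j ∈ Finset.range 10, (∑ k, x k * Bc10 j k) * Bc10 j l) = 0) → x = 0 := by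
  decide

def Bc14 : ℕ → Fin 5 → ZMod 2 := fun j => natCol (([3, 17, 16, 27, 12, 30, 13, 19, 7, 1, 8, 31, 20, 22]).getD j 0)

lemma hwBc14 : ∀ x : Fin 5 → ZMod 2, x ≠ 0 →
    5 ≤ ∑ j ∈ Finset.range 14, if (∑ k, x k * Bc14 j k) ≠ 0 then 1 else 0 := by
  decide

lemma hgBc14 : ∀ x : Fin 5 → ZMod 2,
    (∀ l, (∑ j ∈ Finset.range 14, (∑ k, x k * Bc14 j k) * Bc14 j l) = 0) → x = 0 := by
  decide

def Bc18 : ℕ → Fin 5 → ZMod 2 := fun j => natCol (([31, 24, 26, 9, 30, 14, 7, 22, 21, 1, 21, 13, 16, 20, 17, 18, 2, 20]).getD j 0)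

lemma hwBc18 : ∀ x : Fin 5 → ZMod 2, x ≠ 0 →
    7 ≤ ∑ j ∈ Finset.range 18, if (∑ k, x k * Bc18 j k) ≠ 0 then 1 else 0 := by
  decide

lemma hgBc18 : ∀ x : Fin 5 → ZMod 2,
    (∀ l, (∑ j ∈ Finset.range 18, (∑ k, x k * Bc18 j k) * Bc18 j l) = 0) → x = 0 := by
  decide

theorem lcd_dim5_twoValues' (n : ℕ) (hn : 5 ≤ n)
    (h : n % 31 = 2 ∨ n % 31 = 6 ∨ n % 31 = 8 ∨ n % 31 = 10 ∨ n % 31 = 14 ∨ n % 31 = 18) :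
    dLCD n 5 = 16 * n / 31 - 1 ∨ dLCD n 5 = 16 * n / 31 - 2 := by
  set S := {d | ∃ C : Submodule (ZMod 2) (Fin n → ZMod 2),
    Module.finrank (ZMod 2) C = 5 ∧ IsLCD C ∧ minWt C = d} with hS
  have hub : ∀ d ∈ S, d ≤ 16 * n / 31 - 1 := by
    rintro d ⟨C, hr, -, hmw⟩
    by_contra hcon
    push_neg at hcon
    have hall : ∀ x ∈ C, x ≠ 0 → 16 * n / 31 ≤ wt x := by
      intro x hxC hxne
      have h1 : minWt C ≤ wt x := Nat.sInf_le ⟨x, hxC, hxne, rfl⟩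
      omega
    have h2 := length_ge_gries C hr hall
    have h3 := numeric_gries n hn h
    omega
  have hbdd : BddAbove S := by
    refine ⟨n, ?_⟩
    rintro d ⟨C, hr, -, hmw⟩
    obtain ⟨x, hxC, hxne⟩ := Submodule.exists_mem_ne_zero_of_ne_bot (p := C) (by
      intro hbot
      rw [hbot] at hr
      rw [finrank_bot] at hr
      exact absurd hr (by norm_num))
    have h1 : minWt C ≤ wt x := Nat.sInf_le ⟨x, hxC, hxne, rfl⟩
    have h2 : wt x ≤ n := le_trans (Finset.card_filter_le _ _) (le_of_eq (by simp))
    omega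
  obtain ⟨C0, hr0, hlcd0, hmw0⟩ : ∃ C0 : Submodule (ZMod 2) (Fin n → ZMod 2),
      Module.finrank (ZMod 2) C0 = 5 ∧ IsLCD C0 ∧ 16 * n / 31 - 2 ≤ minWt C0 := by
    rcases h with h | h | h | h | h | h
    · obtain ⟨C0, h1, h2, h3⟩ := construction Bc2 hwBc2 hgBc2 ((n - 33) / 31) n (by omega)
      exact ⟨C0, h1, h2, by omega⟩
    · obtain ⟨C0, h1, h2, h3⟩ := construction Bc6 hwBc6 hgBc6 ((n - 6) / 31) n (by omega)
      exact ⟨C0, h1, h2, by omega⟩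
    · obtain ⟨C0, h1, h2, h3⟩ := construction Bc8 hwBc8 hgBc8 ((n - 8) / 31) n (by omega)
      exact ⟨C0, h1, h2, by omega⟩
    · obtain ⟨C0, h1, h2, h3⟩ := construction Bc10 hwBc10 hgBc10 ((n - 10) / 31) n (by omega)
      exact ⟨C0, h1, h2, by omega⟩
    · obtain ⟨C0, h1, h2, h3⟩ := construction Bc14 hwBc14 hgBc14 ((n - 14) / 31) n (by omega)
      exact ⟨C0, h1, h2, by omega⟩
    · obtain ⟨C0, h1, h2, h3⟩ := construction Bc18 hwBc18 hgBc18 ((n - 18) / 31) n (by omega)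
      exact ⟨C0, h1, h2, by omega⟩
  have hmem : minWt C0 ∈ S := ⟨C0, hr0, hlcd0, rfl⟩
  have h1 : dLCD n 5 ≤ 16 * n / 31 - 1 := csSup_le ⟨_, hmem⟩ hub
  have h2 : 16 * n / 31 - 2 ≤ dLCD n 5 := le_trans hmw0 (le_csSup hbdd hmem)
  omega
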